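/- arXiv:1701.08940 — 2 statements merged into one kernel-verified Lean document; each statement's English description precedes it below -/
import Mathlib

section
/- For every τ ∈ H and (x,y) ∈ ℝ²: (1) φ̃_{τ+1}(x,y) = e((y²−x²)/2)·φ̃_τ(x,y); and (2) if x ≠ 0, then the function τ ↦ φ̃_τ(x,y) satisfies ξ(φ̃_·(x,y))(τ) = φ_τ(x,y). -/
open MeasureTheory Filter Set

noncomputable section

/-- `e(z) = exp(2πiz)` -/
def eC (z : ℂ) : ℂ := Complex.exp (2 * Real.pi * Complex.I * z)

/-- The complementary error function `erfc(x) = (2/√π)∫_x^∞ e^{-r²} dr`. -/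
def erfc (x : ℝ) : ℝ := (2 / Real.sqrt Real.pi) * ∫ r in Set.Ioi x, Real.exp (-(r ^ 2))

/-- `φ_τ(x,y) = √(2v)·x·e((x²/2)τ - (y²/2)·conj τ)` where `v = Im τ`. -/
def phi (τ : ℂ) (x y : ℝ) : ℂ :=
  (Real.sqrt (2 * τ.im) : ℂ) * (x : ℂ) *
    eC (((x : ℂ) ^ 2 / 2) * τ - ((y : ℂ) ^ 2 / 2) * (starRingEnd ℂ) τ)

/-- `φ*_τ(x,y) = e(((y²-x²)/2)τ)·sgn(x)·erfc(√(2πv)|x|)`. -/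
def phiStar (τ : ℂ) (x y : ℝ) : ℂ :=
  eC ((((y : ℂ) ^ 2 - (x : ℂ) ^ 2) / 2) * τ) * (Real.sign x : ℂ) *
    (erfc (Real.sqrt (2 * Real.pi * τ.im) * |x|) : ℂ)

/-- `φ⁺_τ(x,y) = e(((y²-x²)/2)τ)·sgn(x)·1_{y²>x²}`. -/
def phiPlus (τ : ℂ) (x y : ℝ) : ℂ :=
  eC ((((y : ℂ) ^ 2 - (x : ℂ) ^ 2) / 2) * τ) * (Real.sign x : ℂ) *
    (if x ^ 2 < y ^ 2 then 1 else 0)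

/-- `φ̃_τ = φ⁺_τ - φ*_τ`. -/
def phiTilde (τ : ℂ) (x y : ℝ) : ℂ := phiPlus τ x y - phiStar τ x y

/-- The Wirtinger derivative `∂f/∂conj(τ) = (1/2)(∂f/∂u + i·∂f/∂v)`. -/
def dbar (f : ℂ → ℂ) (τ : ℂ) : ℂ :=
  (1 / 2) * (fderiv ℝ f τ 1 + Complex.I * fderiv ℝ f τ Complex.I)

/-- The `ξ`-operator in weight one: `ξ(f)(τ) = 2iv·conj(∂f/∂conj(τ))`. -/
def xi (f : ℂ → ℂ) (τ : ℂ) : ℂ :=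
  2 * Complex.I * (τ.im : ℂ) * (starRingEnd ℂ) (dbar f τ)

lemma gauss_integrable : Integrable (fun r : ℝ => Real.exp (-(r ^ 2))) := by
  simpa using integrable_exp_neg_mul_sq (b := 1) one_pos

lemma erfc_eq (y : ℝ) : erfc y = (2 / Real.sqrt Real.pi) *
    ((∫ r in Set.Ioi (0:ℝ), Real.exp (-(r ^ 2))) - ∫ r in (0:ℝ)..y, Real.exp (-(r ^ 2))) := by
  have hint := gauss_integrable
  have h1 := integral_add_compl (measurableSet_Iic (a := y)) hint
  have h0 := integral_add_compl (measurableSet_Iic (a := (0:ℝ))) hint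
  rw [compl_Iic] at h1 h0
  have h2 := intervalIntegral.integral_Iic_sub_Iic (hint.integrableOn (s := Iic (0:ℝ)))
    (hint.integrableOn (s := Iic y))
  have key : (∫ r in Set.Ioi y, Real.exp (-(r ^ 2)))
      = (∫ r in Set.Ioi (0:ℝ), Real.exp (-(r ^ 2))) - ∫ r in (0:ℝ)..y, Real.exp (-(r ^ 2)) := by
    rw [← h2]; linarith
  unfold erfc; rw [key]

lemma hasDerivAt_erfc (x : ℝ) :
    HasDerivAt erfc (-(2 / Real.sqrt Real.pi) * Real.exp (-(x ^ 2))) x := by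
  have hc : Continuous (fun r : ℝ => Real.exp (-(r ^ 2))) := by continuity
  have hFTC : HasDerivAt (fun y => ∫ r in (0:ℝ)..y, Real.exp (-(r ^ 2)))
      (Real.exp (-(x ^ 2))) x :=
    intervalIntegral.integral_hasDerivAt_right gauss_integrable.intervalIntegrable
      (hc.stronglyMeasurableAtFilter _ _) hc.continuousAt
  have h : HasDerivAt (fun y => (2 / Real.sqrt Real.pi) *
      ((∫ r in Set.Ioi (0:ℝ), Real.exp (-(r ^ 2))) - ∫ r in (0:ℝ)..y, Real.exp (-(r ^ 2))))
      ((2 / Real.sqrt Real.pi) * (0 - Real.exp (-(x ^ 2)))) x :=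
    (((hasDerivAt_const x _).sub hFTC)).const_mul _
  have heq : erfc = fun y => (2 / Real.sqrt Real.pi) *
      ((∫ r in Set.Ioi (0:ℝ), Real.exp (-(r ^ 2))) - ∫ r in (0:ℝ)..y, Real.exp (-(r ^ 2))) :=
    funext erfc_eq
  rw [heq]
  convert h using 1; ring

lemma sign_mul_abs' {x : ℝ} : Real.sign x * |x| = x := by
  rcases lt_trichotomy x 0 with h | h | h
  · rw [Real.sign_of_neg h, abs_of_neg h]; ring
  · simp [h]
  · rw [Real.sign_of_pos h, abs_of_pos h]; ring

lemma xi_phiTilde (τ : ℂ) (hτ : 0 < τ.im) (x y : ℝ) (hx : x ≠ 0) :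
    xi (fun σ => phiTilde σ x y) τ = phi τ x y := by
  set v : ℝ := τ.im with hv
  set k : ℝ := Real.sqrt (2 * Real.pi) * |x| with hk
  set c : ℝ := (y ^ 2 - x ^ 2) / 2 with hc
  set s : ℝ := Real.sign x with hs
  set A : ℂ := if x ^ 2 < y ^ 2 then (1:ℂ) else 0 with hA
  set w : ℂ := 2 * Real.pi * Complex.I * (c : ℂ) with hw
  set d : ℝ := -(2 / Real.sqrt Real.pi) * Real.exp (-((k * Real.sqrt v) ^ 2))
      * (k * (1 / (2 * Real.sqrt v))) with hd
  -- rewrite the function in a convenient form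
  have funeq : (fun σ : ℂ => phiTilde σ x y) = fun σ : ℂ =>
      (s : ℂ) * (Complex.exp (w * σ) *
        (A - ((erfc (k * Real.sqrt σ.im)) : ℂ))) := by
    funext σ
    unfold phiTilde phiPlus phiStar eC
    rw [show Real.sqrt (2 * Real.pi * σ.im) * |x| = k * Real.sqrt σ.im by
      rw [hk, Real.sqrt_mul (by positivity)]; ring]
    rw [hw, hA, hs, hc]
    push_cast
    ring_nf
  -- derivative of the exponential factor
  have hE0 : HasDerivAt (fun σ : ℂ => Complex.exp (w * σ)) (Complex.exp (w * τ) * w) τ := by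
    simpa using ((hasDerivAt_id τ).const_mul w).cexp
  have hE : HasFDerivAt (fun σ : ℂ => Complex.exp (w * σ))
      (((1 : ℂ →L[ℂ] ℂ).smulRight (Complex.exp (w * τ) * w)).restrictScalars ℝ) τ :=
    hE0.hasFDerivAt.restrictScalars ℝ
  -- derivative of the erfc factor
  have hh : HasDerivAt (fun t : ℝ => erfc (k * Real.sqrt t)) d v :=
    (hasDerivAt_erfc _).comp v ((Real.hasDerivAt_sqrt hτ.ne').const_mul k)
  have hh2 : HasDerivAt (fun t : ℝ => A - ((erfc (k * Real.sqrt t) : ℝ) : ℂ)) (-(d:ℂ)) v :=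
    (hh.ofReal_comp).const_sub A
  have hG : HasFDerivAt (fun σ : ℂ => A - ((erfc (k * Real.sqrt σ.im) : ℝ) : ℂ))
      (Complex.imCLM.smulRight (-(d:ℂ))) τ := by
    have him : HasFDerivAt Complex.im Complex.imCLM τ := Complex.imCLM.hasFDerivAt
    have h2 := (hh2.hasFDerivAt).comp τ him
    exact h2.congr_fderiv (by ext z; simp)
  have hf := (hE.mul' hG).const_mul (s : ℂ)
  have hfd := hf.fderiv
  set g : ℝ := erfc (k * Real.sqrt v) with hg
  have h1 : fderiv ℝ (fun σ : ℂ => (s:ℂ) * (Complex.exp (w * σ) *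
      (A - ((erfc (k * Real.sqrt σ.im) : ℝ) : ℂ)))) τ 1
      = (s:ℂ) * ((Complex.exp (w * τ) * w) * (A - (g : ℂ))) := by
    erw [hfd]; simp
  have hI : fderiv ℝ (fun σ : ℂ => (s:ℂ) * (Complex.exp (w * σ) *
      (A - ((erfc (k * Real.sqrt σ.im) : ℝ) : ℂ)))) τ Complex.I
      = (s:ℂ) * (Complex.exp (w * τ) * (-(d:ℂ))
        + Complex.I * (Complex.exp (w * τ) * w) * (A - (g : ℂ))) := by
    erw [hfd]; simp; ring
  have hdbar : dbar (fun σ => phiTilde σ x y) τ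
      = -(Complex.I / 2) * (s : ℂ) * Complex.exp (w * τ) * (d : ℂ) := by
    rw [funeq]
    unfold dbar
    rw [h1, hI]
    linear_combination ((s:ℂ) * (Complex.exp (w * τ) * w) * (A - (g : ℂ)) / 2) * Complex.I_sq
  unfold xi
  rw [hdbar]
  rw [show (starRingEnd ℂ) (-(Complex.I / 2) * (s : ℂ) * Complex.exp (w * τ) * (d : ℂ))
      = (Complex.I / 2) * (s : ℂ) * Complex.exp ((starRingEnd ℂ) w * (starRingEnd ℂ) τ)
        * (d : ℂ) by
    rw [map_mul, map_mul, map_mul, map_neg, map_div₀, Complex.conj_I, ← Complex.exp_conj,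
      Complex.conj_ofReal, Complex.conj_ofReal, map_mul, map_ofNat]
    ring]
  have hcw : (starRingEnd ℂ) w = -(2 * Real.pi * Complex.I * (c : ℂ)) := by
    rw [hw, map_mul, map_mul, map_mul, Complex.conj_I, Complex.conj_ofReal,
      Complex.conj_ofReal, map_ofNat]
    ring
  -- the real coefficient identity
  have hvd : -(v * d) = |x| * Real.sqrt (2 * v) * Real.exp (-(2 * Real.pi * x ^ 2 * v)) := by
    have hsq : (k * Real.sqrt v) ^ 2 = 2 * Real.pi * x ^ 2 * v := by
      rw [mul_pow, Real.sq_sqrt hτ.le, hk, mul_pow, Real.sq_sqrt (by positivity), sq_abs]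
    have e1 : Real.sqrt v ^ 2 = v := Real.sq_sqrt hτ.le
    have e2 : Real.sqrt v * Real.sqrt v = v := Real.mul_self_sqrt hτ.le
    have hsv : Real.sqrt v ≠ 0 := by positivity
    have hsπ : Real.sqrt Real.pi ≠ 0 := by positivity
    rw [hd, hsq, hk, Real.sqrt_mul (by norm_num : (0:ℝ) ≤ 2) Real.pi,
      Real.sqrt_mul (by norm_num : (0:ℝ) ≤ 2) v]
    have h2π : Real.sqrt 2 * Real.sqrt Real.pi / Real.sqrt Real.pi = Real.sqrt 2 := by
      field_simp
    field_simp
    ring_nf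
    rw [Real.sq_sqrt hτ.le]
  have key : 2 * Complex.I * (v : ℂ) * ((Complex.I / 2) * (s : ℂ)
        * Complex.exp ((starRingEnd ℂ) w * (starRingEnd ℂ) τ) * (d : ℂ))
      = ((-(v * d) : ℝ) : ℂ) * Complex.exp ((starRingEnd ℂ) w * (starRingEnd ℂ) τ) * (s : ℂ) := by
    push_cast
    linear_combination ((v : ℂ) * (s : ℂ) * (d : ℂ)
      * Complex.exp ((starRingEnd ℂ) w * (starRingEnd ℂ) τ)) * Complex.I_sq
  rw [key, hvd]
  unfold phi eC
  rw [← hv]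
  have hsub : τ - (starRingEnd ℂ) τ = ((2 * v : ℝ) : ℂ) * Complex.I := Complex.sub_conj τ
  push_cast at hsub
  have hexp : -(2 * (Real.pi : ℂ) * (x : ℂ) ^ 2 * (v : ℂ))
        + (starRingEnd ℂ) w * (starRingEnd ℂ) τ
      = 2 * (Real.pi : ℂ) * Complex.I * (((x : ℂ) ^ 2 / 2) * τ
        - ((y : ℂ) ^ 2 / 2) * (starRingEnd ℂ) τ) := by
    rw [hcw, hc]
    push_cast
    linear_combination (-(Real.pi : ℂ) * Complex.I * (x : ℂ) ^ 2) * hsub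
      + (-(2 * (Real.pi : ℂ) * (x : ℂ) ^ 2 * (v : ℂ))) * Complex.I_sq
  have hmul : Complex.exp (-(2 * (Real.pi : ℂ) * (x : ℂ) ^ 2 * (v : ℂ)))
        * Complex.exp ((starRingEnd ℂ) w * (starRingEnd ℂ) τ)
      = Complex.exp (2 * (Real.pi : ℂ) * Complex.I * (((x : ℂ) ^ 2 / 2) * τ
        - ((y : ℂ) ^ 2 / 2) * (starRingEnd ℂ) τ)) := by
    rw [← Complex.exp_add, hexp]
  have hxs : (s : ℂ) * ((|x| : ℝ) : ℂ) = (x : ℂ) := by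
    rw [← Complex.ofReal_mul, hs, sign_mul_abs']
  push_cast
  linear_combination ((Real.sqrt (2 * v) : ℂ) * (s : ℂ) * ((|x| : ℝ) : ℂ)) * hmul
    + ((Real.sqrt (2 * v) : ℂ) * Complex.exp (2 * (Real.pi : ℂ) * Complex.I
      * (((x : ℂ) ^ 2 / 2) * τ - ((y : ℂ) ^ 2 / 2) * (starRingEnd ℂ) τ))) * hxs

/-- (1) `φ̃_{τ+1}(x,y) = e((y²-x²)/2)·φ̃_τ(x,y)`, and
(2) for `x ≠ 0`, `ξ(φ̃_·(x,y))(τ) = φ_τ(x,y)`. -/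
theorem stmt5 (τ : ℂ) (hτ : 0 < τ.im) :
    (∀ x y : ℝ, phiTilde (τ + 1) x y =
      eC ((((y : ℂ) ^ 2 - (x : ℂ) ^ 2) / 2)) * phiTilde τ x y) ∧
    (∀ x y : ℝ, x ≠ 0 → xi (fun σ => phiTilde σ x y) τ = phi τ x y) := by
  constructor
  · intro x y
    unfold phiTilde phiPlus phiStar eC
    have him : (τ + 1).im = τ.im := by simp
    rw [him]
    rw [show (((y : ℂ) ^ 2 - (x : ℂ) ^ 2) / 2) * (τ + 1)
        = (((y : ℂ) ^ 2 - (x : ℂ) ^ 2) / 2) * τ + (((y : ℂ) ^ 2 - (x : ℂ) ^ 2) / 2) by ring]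
    rw [mul_add, Complex.exp_add]
    ring
  · intro x y hx
    exact xi_phiTilde τ hτ x y hx

end
end

section
/- Let N be a positive integer, τ ∈ H, and let x₁, x₂ be real numbers with x₁x₂ < 0. Then ∫_0^∞ φ_τ(ι_t(x₁,x₂)) dt/t = 0, the integral converging absolutely. -/
open MeasureTheory Filter Set

noncomputable section

/-- The isometry `ι_t(x₁,x₂) = ((t⁻¹x₁+tx₂)/√(2N), (t⁻¹x₁-tx₂)/√(2N))`. -/
def iota (N : ℕ) (t x₁ x₂ : ℝ) : ℝ × ℝ :=
  ((t⁻¹ * x₁ + t * x₂) / Real.sqrt (2 * N), (t⁻¹ * x₁ - t * x₂) / Real.sqrt (2 * N))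

lemma phi_neg (τ : ℂ) (x y : ℝ) : phi τ (-x) y = - phi τ x y := by
  unfold phi
  push_cast
  rw [neg_sq]
  ring

lemma phi_norm (τ : ℂ) (hτ : 0 < τ.im) (x y : ℝ) :
    ‖phi τ x y‖ = Real.sqrt (2*τ.im) * |x| * Real.exp (-(Real.pi * τ.im * (x^2+y^2))) := by
  unfold phi eC
  have hx2 : ((x:ℂ)^2/2) = ((x^2/2 : ℝ):ℂ) := by push_cast; ring
  have hy2 : ((y:ℂ)^2/2) = ((y^2/2 : ℝ):ℂ) := by push_cast; ring
  rw [norm_mul, norm_mul, Complex.norm_real, Real.norm_eq_abs,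
    abs_of_nonneg (Real.sqrt_nonneg _), Complex.norm_real, Real.norm_eq_abs,
    Complex.norm_exp]
  congr 1
  rw [hx2, hy2]
  simp only [Complex.mul_re, Complex.mul_im, Complex.sub_re, Complex.sub_im, Complex.I_re,
    Complex.I_im, Complex.conj_re, Complex.conj_im, Complex.ofReal_re, Complex.ofReal_im,
    Complex.re_ofNat, Complex.im_ofNat]
  ring


/-- for `x₁x₂ < 0`, `∫_0^∞ φ_τ(ι_t(x₁,x₂)) dt/t = 0`, the integral
converging absolutely. -/
theorem stmt9 (N : ℕ) (hN : 0 < N) (τ : ℂ) (hτ : 0 < τ.im) (x₁ x₂ : ℝ)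
    (hx : x₁ * x₂ < 0) :
    IntegrableOn (fun t : ℝ =>
      phi τ (iota N t x₁ x₂).1 (iota N t x₁ x₂).2 / (t : ℂ)) (Set.Ioi 0) ∧
    (∫ t in Set.Ioi (0 : ℝ), phi τ (iota N t x₁ x₂).1 (iota N t x₁ x₂).2 / (t : ℂ)) = 0 := by
  have ha : x₁ ≠ 0 := fun h => by simp [h] at hx
  have hb : x₂ ≠ 0 := fun h => by simp [h] at hx
  have hNr : (0:ℝ) < N := by exact_mod_cast hN
  have hsN : 0 < Real.sqrt (2*N) := Real.sqrt_pos.2 (by positivity)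
  set f : ℝ → ℂ := fun t => phi τ (iota N t x₁ x₂).1 (iota N t x₁ x₂).2 / (t:ℂ) with hf
  set α : ℝ := Real.pi * τ.im * x₁^2 / N with hα
  set β : ℝ := Real.pi * τ.im * x₂^2 / N with hβ
  have hαpos : 0 < α := by rw [hα]; positivity
  have hβpos : 0 < β := by rw [hβ]; positivity
  set C : ℝ := Real.sqrt (2*τ.im) / Real.sqrt (2*N) * (|x₁|/α + |x₂|) with hC
  -- continuity
  have hinv : ContinuousOn (fun t:ℝ => t⁻¹) (Ioi 0) :=
    continuousOn_inv₀.mono (fun x hx => ne_of_gt hx)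
  have hc1 : ContinuousOn (fun t:ℝ => (iota N t x₁ x₂).1) (Ioi 0) := by
    unfold iota
    exact ((hinv.mul continuousOn_const).add (continuousOn_id.mul continuousOn_const)).div_const _
  have hc2 : ContinuousOn (fun t:ℝ => (iota N t x₁ x₂).2) (Ioi 0) := by
    unfold iota
    exact ((hinv.mul continuousOn_const).sub (continuousOn_id.mul continuousOn_const)).div_const _
  have hcont : ContinuousOn f (Ioi 0) := by
    rw [hf]
    apply ContinuousOn.div _ (Complex.continuous_ofReal.continuousOn)
      (fun t ht => Complex.ofReal_ne_zero.mpr (ne_of_gt ht))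
    unfold phi eC
    apply ContinuousOn.mul
    · exact continuousOn_const.mul (Complex.continuous_ofReal.comp_continuousOn hc1)
    · apply Complex.continuous_exp.comp_continuousOn
      apply ContinuousOn.mul continuousOn_const
      apply ContinuousOn.sub
      · exact (((Complex.continuous_ofReal.comp_continuousOn hc1).pow 2).div_const _).mul
          continuousOn_const
      · exact (((Complex.continuous_ofReal.comp_continuousOn hc2).pow 2).div_const _).mul
          continuousOn_const
  -- the bound
  have hbd : ∀ t ∈ Ioi (0:ℝ), ‖f t‖ ≤ C * Real.exp (-β * t^2) := by
    intro t ht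
    have ht' : (0:ℝ) < t := ht
    set X := (iota N t x₁ x₂).1
    set Y := (iota N t x₁ x₂).2
    have hXY : X^2 + Y^2 = ((t⁻¹*x₁)^2 + (t*x₂)^2)/N := by
      show ((t⁻¹ * x₁ + t * x₂) / Real.sqrt (2 * N))^2
        + ((t⁻¹ * x₁ - t * x₂) / Real.sqrt (2 * N))^2 = _
      rw [div_pow, div_pow, ← add_div, Real.sq_sqrt (by positivity)]
      field_simp
      ring
    have habs1 : |X| ≤ (t⁻¹*|x₁| + t*|x₂|)/Real.sqrt (2*N) := by
      show |(t⁻¹ * x₁ + t * x₂) / Real.sqrt (2 * N)| ≤ _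
      rw [abs_div, abs_of_nonneg (Real.sqrt_nonneg _)]
      gcongr
      refine (abs_add_le _ _).trans ?_
      rw [abs_mul, abs_mul, abs_of_pos ht', abs_of_pos (inv_pos.2 ht')]
    have hexp : Real.exp (-(Real.pi * τ.im * (X^2+Y^2)))
        = Real.exp (-(α * (t⁻¹)^2)) * Real.exp (-(β * t^2)) := by
      rw [← Real.exp_add, hXY, hα, hβ]
      congr 1
      field_simp
      ring
    set Eα := Real.exp (-(α * (t⁻¹)^2)) with hEα
    have hEαpos : 0 < Eα := Real.exp_pos _
    have hE1 : Eα ≤ (α*(t⁻¹)^2)⁻¹ := by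
      rw [hEα, Real.exp_neg]
      have h1 : α*(t⁻¹)^2 ≤ Real.exp (α*(t⁻¹)^2) := by
        linarith [Real.add_one_le_exp (α*(t⁻¹)^2)]
      exact inv_anti₀ (by positivity) h1
    have hE2 : Eα ≤ 1 := Real.exp_le_one_iff.mpr (neg_nonpos.mpr (by positivity))
    have hnorm : ‖f t‖ = Real.sqrt (2*τ.im) * |X| * (Eα * Real.exp (-(β * t^2))) / t := by
      rw [hf]
      show ‖phi τ X Y / (t:ℂ)‖ = _
      rw [norm_div, Complex.norm_real, Real.norm_eq_abs, abs_of_pos ht', phi_norm τ hτ, hexp]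
    calc ‖f t‖ = Real.sqrt (2*τ.im) * |X| * (Eα * Real.exp (-(β * t^2))) / t := hnorm
      _ ≤ Real.sqrt (2*τ.im) * ((t⁻¹*|x₁| + t*|x₂|)/Real.sqrt (2*N))
            * (Eα * Real.exp (-(β * t^2))) / t := by gcongr
      _ = Real.sqrt (2*τ.im) / Real.sqrt (2*N)
            * ((|x₁| * (t⁻¹)^2 * Eα + |x₂| * Eα) * Real.exp (-(β * t^2))) := by
          field_simp
      _ ≤ Real.sqrt (2*τ.im) / Real.sqrt (2*N)
            * ((|x₁|/α + |x₂|) * Real.exp (-(β * t^2))) := by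
          apply mul_le_mul_of_nonneg_left _ (by positivity)
          apply mul_le_mul_of_nonneg_right _ (Real.exp_nonneg _)
          apply add_le_add
          · calc |x₁| * (t⁻¹)^2 * Eα ≤ |x₁| * (t⁻¹)^2 * (α*(t⁻¹)^2)⁻¹ := by gcongr
              _ = |x₁|/α := by field_simp
          · calc |x₂| * Eα ≤ |x₂| * 1 := by gcongr
              _ = |x₂| := mul_one _
      _ = C * Real.exp (-β * t^2) := by rw [hC, neg_mul]; ring
  have hint : IntegrableOn f (Ioi 0) := by
    apply Integrable.mono' (((integrable_exp_neg_mul_sq hβpos).const_mul C).integrableOn)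
      (hcont.aestronglyMeasurable measurableSet_Ioi)
    exact (ae_restrict_iff' measurableSet_Ioi).2 (ae_of_all _ hbd)
  refine ⟨hint, ?_⟩
  -- the substitution t ↦ c2/t
  set c2 : ℝ := -(x₁/x₂) with hc2def
  have hc2pos : 0 < c2 := by
    have h : x₁/x₂ < 0 := by
      rcases lt_or_gt_of_ne hb with h2|h2
      · have h1 : 0 < x₁ := by nlinarith
        exact div_neg_of_pos_of_neg h1 h2
      · have h1 : x₁ < 0 := by nlinarith
        exact div_neg_of_neg_of_pos h1 h2
    rw [hc2def]; linarith
  have hc2C : (c2:ℂ) ≠ 0 := Complex.ofReal_ne_zero.mpr (ne_of_gt hc2pos)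
  have hkey : ∀ t ∈ Ioi (0:ℝ), f (c2 * t⁻¹) = -(((t:ℂ)^2 / (c2:ℂ)) * f t) := by
    intro t ht
    have ht' : (0:ℝ) < t := ht
    have htne : t ≠ 0 := ne_of_gt ht'
    have h1 : (c2*t⁻¹)⁻¹ * x₁ = -(t*x₂) := by
      rw [hc2def]
      field_simp
    have h2 : (c2*t⁻¹) * x₂ = -(t⁻¹*x₁) := by
      rw [hc2def]
      field_simp
    have hiota : iota N (c2*t⁻¹) x₁ x₂ = (-(iota N t x₁ x₂).1, (iota N t x₁ x₂).2) := by
      unfold iota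
      rw [h1, h2, Prod.mk.injEq]
      constructor <;> ring
    rw [hf]
    show phi τ (iota N (c2*t⁻¹) x₁ x₂).1 (iota N (c2*t⁻¹) x₁ x₂).2 / ((c2*t⁻¹ : ℝ):ℂ) = _
    rw [hiota]
    show phi τ (-(iota N t x₁ x₂).1) ((iota N t x₁ x₂).2) / _ = _
    rw [phi_neg]
    have htC : (t:ℂ) ≠ 0 := Complex.ofReal_ne_zero.mpr htne
    push_cast
    field_simp
  set I := ∫ t in Ioi (0:ℝ), f t with hI
  have e2 := integral_comp_mul_left_Ioi f 0 hc2pos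
  rw [mul_zero] at e2
  have e1 := integral_comp_rpow_Ioi (fun y => f (c2*y)) (p := -1) (by norm_num)
  have e3 : (∫ x in Ioi (0:ℝ), (|(-1:ℝ)| * x ^ ((-1:ℝ)-1)) • f (c2 * x ^ (-1:ℝ)))
      = ∫ x in Ioi (0:ℝ), (-(c2⁻¹)) • f x := by
    apply setIntegral_congr_fun measurableSet_Ioi
    intro x hx
    have hx' : (0:ℝ) < x := hx
    have hxC : (x:ℂ) ≠ 0 := Complex.ofReal_ne_zero.mpr (ne_of_gt hx')
    have hr1 : x ^ (-1:ℝ) = x⁻¹ := by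
      rw [Real.rpow_neg_one]
    have hr2 : x ^ ((-1:ℝ)-1) = (x^2)⁻¹ := by
      rw [show ((-1:ℝ)-1) = -(2:ℝ) by norm_num, Real.rpow_neg hx'.le,
        show ((2:ℝ)) = ((2:ℕ):ℝ) by norm_num, Real.rpow_natCast]
    dsimp only
    rw [hr1, hr2, hkey x hx, abs_neg, abs_one, one_mul, Complex.real_smul, Complex.real_smul]
    push_cast
    field_simp
  rw [e3, integral_smul] at e1
  rw [e2] at e1
  -- e1 : (-(c2⁻¹)) • I = c2⁻¹ • I
  have h0 : c2⁻¹ • I = 0 := by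
    have h' := e1
    rw [neg_smul] at h'
    exact CharZero.eq_neg_self_iff.mp h'.symm
  have := (smul_eq_zero.mp h0).resolve_left (inv_ne_zero (ne_of_gt hc2pos))
  exact this

end
end
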